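/- The value of A at the largest real root β of B satisfies A(β) ≤ 1 − (1/c)·(σ̄²/θ²)², with equality if and only if σ_1² = ⋯ = σ_L². -/

import Mathlib

open Finset Filter Set Topology

set_option maxHeartbeats 1600000 in
/-- `A(β) ≤ 1 − (1/c)(σ̄²/θ²)²`, with equality iff the noise is
homoscedastic. -/
theorem A_at_beta_upper_bound
    (c θ : ℝ) (hc : 0 < c) (hθ : 0 < θ)
    (L : ℕ) (hL : 1 ≤ L) (p σ : Fin L → ℝ)
    (hp : ∀ ℓ, 0 < p ℓ) (hpsum : ∑ ℓ, p ℓ = 1)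
    (hσ : ∀ ℓ, 0 < σ ℓ)
    (σmax : ℝ) (hmaxle : ∀ ℓ, σ ℓ ≤ σmax) (hmaxmem : ∃ ℓ, σ ℓ = σmax)
    (A : ℝ → ℝ) (hA : ∀ x, A x = 1 - c * ∑ ℓ, p ℓ * (σ ℓ) ^ 2 / (x - σ ℓ) ^ 2)
    (B : ℝ → ℝ) (hB : ∀ x, B x = 1 - c * θ ^ 2 * ∑ ℓ, p ℓ / (x - σ ℓ))
    (β : ℝ) (hβmem : σmax < β) (hβroot : B β = 0) :
    A β ≤ 1 - (1 / c) * ((∑ ℓ, p ℓ * σ ℓ) / θ ^ 2) ^ 2 ∧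
    (A β = 1 - (1 / c) * ((∑ ℓ, p ℓ * σ ℓ) / θ ^ 2) ^ 2 ↔ (∀ ℓ ℓ' : Fin L, σ ℓ = σ ℓ')) := by
  have hβσ : ∀ ℓ, 0 < β - σ ℓ := fun ℓ => sub_pos.2 (lt_of_le_of_lt (hmaxle ℓ) hβmem)
  obtain ⟨ℓm, hℓm⟩ := hmaxmem
  have hβpos : 0 < β := lt_trans (hσ ℓm) (lt_of_le_of_lt (hmaxle ℓm) hβmem)
  set v : Fin L → ℝ := fun ℓ => σ ℓ / (β - σ ℓ) with hv
  set b : Fin L → ℝ := fun ℓ => 1 / (β - σ ℓ) with hbdef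
  set S := ∑ ℓ, p ℓ * v ℓ with hS
  set T := ∑ ℓ, p ℓ * b ℓ with hT
  set M := ∑ ℓ, p ℓ * σ ℓ with hM
  set Q := ∑ ℓ, p ℓ * (v ℓ) ^ 2 with hQ
  -- root equation
  have hroot : c * θ ^ 2 * T = 1 := by
    have h0 := hβroot
    rw [hB] at h0
    have h1 : ∑ ℓ, p ℓ / (β - σ ℓ) = T := by
      rw [hT]; exact Finset.sum_congr rfl fun ℓ _ => by rw [hbdef]; ring
    rw [h1] at h0; linarith
  have hcθ : (0:ℝ) < c * θ ^ 2 := by positivity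
  have hTval : T = 1 / (c * θ ^ 2) := by
    field_simp at hroot ⊢; linarith
  -- A β = 1 - c * Q
  have hAβ : A β = 1 - c * Q := by
    rw [hA, hQ]
    congr 1
    congr 1
    refine Finset.sum_congr rfl fun ℓ _ => ?_
    rw [hv]; simp only; rw [div_pow, mul_div_assoc]
  -- Jensen
  have hJ : ∑ ℓ, p ℓ * (v ℓ - S) ^ 2 = Q - S ^ 2 := by
    have e : ∑ ℓ, p ℓ * (v ℓ - S) ^ 2
        = ∑ ℓ, (p ℓ * (v ℓ) ^ 2 - 2 * S * (p ℓ * v ℓ) + S ^ 2 * p ℓ) :=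
      Finset.sum_congr rfl fun ℓ _ => by ring
    rw [e, Finset.sum_add_distrib, Finset.sum_sub_distrib, ← Finset.mul_sum,
      ← Finset.mul_sum, hpsum, ← hS, ← hQ]
    ring
  have hJnonneg : 0 ≤ ∑ ℓ, p ℓ * (v ℓ - S) ^ 2 :=
    Finset.sum_nonneg fun ℓ _ => mul_nonneg (hp ℓ).le (sq_nonneg _)
  have hQS : S ^ 2 ≤ Q := by linarith
  -- Chebyshev via double sum
  have key : ∀ f g : Fin L → ℝ,
      ∑ ℓ, ∑ ℓ', p ℓ * p ℓ' * (f ℓ * g ℓ') = (∑ ℓ, p ℓ * f ℓ) * (∑ ℓ, p ℓ * g ℓ) := by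
    intro f g
    rw [Finset.sum_mul_sum]
    exact Finset.sum_congr rfl fun ℓ _ => Finset.sum_congr rfl fun ℓ' _ => by ring
  have hDS : ∑ ℓ, ∑ ℓ', p ℓ * p ℓ' * ((σ ℓ - σ ℓ') * (b ℓ - b ℓ')) = 2 * (S - M * T) := by
    have e1 := key (fun ℓ => σ ℓ * b ℓ) (fun _ => 1)
    have e2 := key σ b
    have e3 := key b σ
    have e4 := key (fun _ => 1) (fun ℓ => σ ℓ * b ℓ)
    have expand : ∑ ℓ, ∑ ℓ', p ℓ * p ℓ' * ((σ ℓ - σ ℓ') * (b ℓ - b ℓ'))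
        = ∑ ℓ, ∑ ℓ', (p ℓ * p ℓ' * (σ ℓ * b ℓ * 1) - p ℓ * p ℓ' * (σ ℓ * b ℓ')
          - p ℓ * p ℓ' * (b ℓ * σ ℓ') + p ℓ * p ℓ' * (1 * (σ ℓ' * b ℓ'))) :=
      Finset.sum_congr rfl fun ℓ _ => Finset.sum_congr rfl fun ℓ' _ => by ring
    rw [expand]
    simp only [Finset.sum_add_distrib, Finset.sum_sub_distrib]
    rw [e1, e2, e3, e4]
    have hp1 : ∑ ℓ, p ℓ * 1 = 1 := by simp [hpsum]
    have hSv : ∑ ℓ, p ℓ * (σ ℓ * b ℓ) = S := by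
      rw [hS]; exact Finset.sum_congr rfl fun ℓ _ => by rw [hv, hbdef]; ring
    rw [hp1, hSv, ← hM, ← hT]
    ring
  have hpair : ∀ ℓ ℓ' : Fin L, 0 ≤ p ℓ * p ℓ' * ((σ ℓ - σ ℓ') * (b ℓ - b ℓ')) := by
    intro ℓ ℓ'
    have h1 := hβσ ℓ; have h2 := hβσ ℓ'
    have : (σ ℓ - σ ℓ') * (b ℓ - b ℓ') = (σ ℓ - σ ℓ') ^ 2 / ((β - σ ℓ) * (β - σ ℓ')) := by
      rw [hbdef]; field_simp; ring
    rw [this]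
    have := (hp ℓ).le; have := (hp ℓ').le
    positivity
  have hCheb : M * T ≤ S := by
    have h0 : 0 ≤ ∑ ℓ, ∑ ℓ', p ℓ * p ℓ' * ((σ ℓ - σ ℓ') * (b ℓ - b ℓ')) :=
      Finset.sum_nonneg fun ℓ _ => Finset.sum_nonneg fun ℓ' _ => hpair ℓ ℓ'
    rw [hDS] at h0; linarith
  have hMnonneg : 0 ≤ M :=
    Finset.sum_nonneg fun ℓ _ => mul_nonneg (hp ℓ).le (hσ ℓ).le
  have hMT : 0 ≤ M * T := by
    rw [hTval]; positivity
  have hMT2 : (M * T) ^ 2 ≤ S ^ 2 := by nlinarith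
  -- RHS rewriting
  have hRHS : 1 - (1 / c) * (M / θ ^ 2) ^ 2 = 1 - c * (M * T) ^ 2 := by
    rw [hTval]; field_simp
  constructor
  · rw [hAβ, hRHS]
    have h1 : (M * T) ^ 2 ≤ Q := le_trans hMT2 hQS
    have h2 := mul_le_mul_of_nonneg_left h1 hc.le
    linarith
  constructor
  · -- equality implies homoscedastic
    intro heq
    rw [hAβ, hRHS] at heq
    have hQeq : Q = (M * T) ^ 2 := by
      have : c * Q = c * (M * T) ^ 2 := by linarith
      exact mul_left_cancel₀ (ne_of_gt hc) this
    have hQS2 : Q = S ^ 2 := le_antisymm (by linarith) hQS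
    have hzero : ∑ ℓ, p ℓ * (v ℓ - S) ^ 2 = 0 := by rw [hJ, hQS2]; ring
    have hall : ∀ ℓ ∈ Finset.univ, p ℓ * (v ℓ - S) ^ 2 = 0 :=
      (Finset.sum_eq_zero_iff_of_nonneg fun ℓ _ => mul_nonneg (hp ℓ).le (sq_nonneg _)).1 hzero
    have hveq : ∀ ℓ : Fin L, v ℓ = S := by
      intro ℓ
      have h := hall ℓ (Finset.mem_univ ℓ)
      have h2 : (v ℓ - S) ^ 2 = 0 := by
        rcases mul_eq_zero.1 h with h' | h'
        · exact absurd h' (ne_of_gt (hp ℓ))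
        · exact h'
      have h3 := sq_eq_zero_iff.1 h2
      linarith
    intro ℓ ℓ'
    have hv1 : v ℓ = v ℓ' := by rw [hveq ℓ, hveq ℓ']
    rw [hv] at hv1
    simp only at hv1
    have h1 := hβσ ℓ; have h2 := hβσ ℓ'
    have hcross : σ ℓ * (β - σ ℓ') = σ ℓ' * (β - σ ℓ) :=
      (div_eq_div_iff (ne_of_gt h1) (ne_of_gt h2)).1 hv1
    have : σ ℓ * β = σ ℓ' * β := by linear_combination hcross
    exact mul_right_cancel₀ (ne_of_gt hβpos) this
  · -- homoscedastic implies equality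
    intro hconst
    have ℓ0 : Fin L := ⟨0, hL⟩
    set s := σ ℓ0 with hs
    have hσs : ∀ ℓ, σ ℓ = s := fun ℓ => hconst ℓ ℓ0
    have hβs : 0 < β - s := hβσ ℓ0
    have hMs : M = s := by
      rw [hM]
      have : ∀ ℓ : Fin L, p ℓ * σ ℓ = p ℓ * s := fun ℓ => by rw [hσs ℓ]
      rw [Finset.sum_congr rfl fun ℓ _ => this ℓ, ← Finset.sum_mul, hpsum, one_mul]
    have hTs : T = 1 / (β - s) := by
      rw [hT]
      have : ∀ ℓ : Fin L, p ℓ * b ℓ = p ℓ * (1 / (β - s)) := fun ℓ => by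
        rw [hbdef]; simp only; rw [hσs ℓ]
      rw [Finset.sum_congr rfl fun ℓ _ => this ℓ, ← Finset.sum_mul, hpsum, one_mul]
    have hQs : Q = (s / (β - s)) ^ 2 := by
      rw [hQ]
      have : ∀ ℓ : Fin L, p ℓ * (v ℓ) ^ 2 = p ℓ * (s / (β - s)) ^ 2 := fun ℓ => by
        rw [hv]; simp only; rw [hσs ℓ]
      rw [Finset.sum_congr rfl fun ℓ _ => this ℓ, ← Finset.sum_mul, hpsum, one_mul]
    -- from root: β - s = c θ²
    have hβseq : β - s = c * θ ^ 2 := by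
      rw [hTs] at hroot
      field_simp at hroot
      linarith
    rw [hAβ, hRHS, hQs, hMs, hTs, hβseq]
    rw [one_div]
    ring
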